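/- Let (𝒳,𝒜) be a symmetric, connected, locally finite directed graph, let 𝒯 ⊆ 𝒜 be a spanning tree, and let j, k : (0,1)×𝒜 → (0,∞) be jump intensities. Assume that for all t ∈ (0,1): (i) χ_a[k](t,z→z') = χ_a[j](t,z→z') for every arc (z→z') ∈ 𝒯; (ii) χ_c[k](t,(z→z'→z)) = χ_c[j](t,(z→z'→z)) for every arc (z→z') ∈ 𝒜; (iii) for every arc (x→y) ∈ 𝒜 ∖ 𝒯, χ_c[k](t,f) = χ_c[j](t,f), where f is the closed walk obtained by concatenating (x→y) with the unique simple 𝒯-walk from y to x. Then for all t ∈ (0,1): χ_a[k](t,z→z') = χ_a[j](t,z→z') for every arc (z→z') ∈ 𝒜, and χ_c[k](t,c) = χ_c[j](t,c) for every closed walk c. -/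

import Mathlib

namespace Stmt8Aux

variable {X : Type*}

/-- A simple directed `T`-walk of length `n` from `x` to `y`. -/
def IsTW (T : Set (X × X)) (x y : X) (n : ℕ) (w : ℕ → X) : Prop :=
  1 ≤ n ∧ w 0 = x ∧ w n = y ∧ (∀ i < n, (w i, w (i + 1)) ∈ T) ∧
    (∀ i j, i < n → j < n → w i = w j → i = j)

/-- The spanning-tree property: existence and uniqueness of simple walks. -/
def Tree (T : Set (X × X)) : Prop :=
  ∀ x y : X, x ≠ y → (∃ n w, IsTW T x y n w) ∧
    ∀ n w m v, IsTW T x y n w → IsTW T x y m v → n = m ∧ ∀ i ≤ n, w i = v i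

theorem tw_inj {T : Set (X × X)} (hT : Tree T) {x y : X} {n : ℕ} {w : ℕ → X}
    (hxy : x ≠ y) (h : IsTW T x y n w) :
    ∀ i j, i ≤ n → j ≤ n → w i = w j → i = j := by
  obtain ⟨hn, h0, hend, harc, hinj⟩ := h
  have key : ∀ i < n, w i ≠ w n := by
    intro i hi hiw
    rcases Nat.eq_zero_or_pos i with rfl | hipos
    · exact hxy (h0 ▸ hend ▸ hiw)
    · have hIW : IsTW T x y i w :=
        ⟨hipos, h0, hiw.trans hend, fun l hl => harc l (hl.trans hi),
          fun a b ha hb => hinj a b (ha.trans hi) (hb.trans hi)⟩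
      have := ((hT x y hxy).2 i w n w hIW ⟨hn, h0, hend, harc, hinj⟩).1
      omega
  intro i j hi hj hij
  rcases hi.lt_or_eq with hi' | rfl
  · rcases hj.lt_or_eq with hj' | rfl
    · exact hinj i j hi' hj' hij
    · exact absurd hij (key i hi')
  · rcases hj.lt_or_eq with hj' | rfl
    · exact absurd hij.symm (key j hj')
    · rfl

open Classical in
/-- Product of the ratio along the chosen simple tree walk. -/
noncomputable def pp (T : Set (X × X)) (r : X → X → ℝ) (hT : Tree T) (x y : X) : ℝ :=
  if h : x = y then 1
  else ∏ i ∈ Finset.range ((hT x y h).1.choose),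
    r ((hT x y h).1.choose_spec.choose i) ((hT x y h).1.choose_spec.choose (i + 1))

theorem pp_self {T : Set (X × X)} (r : X → X → ℝ) (hT : Tree T) (x : X) :
    pp T r hT x x = 1 := dif_pos rfl

theorem pp_eq {T : Set (X × X)} {r : X → X → ℝ} {hT : Tree T} {x y : X}
    (hxy : x ≠ y) {n : ℕ} {w : ℕ → X} (h : IsTW T x y n w) :
    pp T r hT x y = ∏ i ∈ Finset.range n, r (w i) (w (i + 1)) := by
  rw [pp, dif_neg hxy]
  have hspec := (hT x y hxy).1.choose_spec.choose_spec
  obtain ⟨hnm, hagree⟩ := (hT x y hxy).2 _ _ _ _ hspec h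
  refine Finset.prod_congr (by rw [hnm]) fun i hi => ?_
  rw [Finset.mem_range] at hi
  rw [hagree i (by omega), hagree (i + 1) (by omega)]

theorem pp_pos {T : Set (X × X)} {r : X → X → ℝ} (hT : Tree T)
    (hrpos : ∀ z z', (z, z') ∈ T → 0 < r z z') (x y : X) :
    0 < pp T r hT x y := by
  rcases eq_or_ne x y with rfl | hxy
  · rw [pp_self]; norm_num
  · obtain ⟨n, w, hw⟩ := (hT x y hxy).1
    rw [pp_eq hxy hw]
    exact Finset.prod_pos fun i hi =>
      hrpos _ _ (hw.2.2.2.1 i (Finset.mem_range.mp hi))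

/-- The product of `r` along *any* tree walk only depends on the endpoints. -/
theorem prod_walk {T : Set (X × X)} {r : X → X → ℝ} (hT : Tree T)
    (hnoloop : ∀ z : X, (z, z) ∉ T)
    (hredge : ∀ z z', (z, z') ∈ T → r z z' * r z' z = 1)
    (hTsymm : ∀ z z', (z, z') ∈ T → (z', z) ∈ T) :
    ∀ (n : ℕ) (w : ℕ → X), (∀ i < n, (w i, w (i + 1)) ∈ T) →
      ∏ i ∈ Finset.range n, r (w i) (w (i + 1)) = pp T r hT (w 0) (w n) := by
  intro n
  induction n using Nat.strong_induction_on with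
  | _ n IH =>
  intro w harc
  by_cases hinj : ∀ i j, i < n → j < n → w i = w j → i = j
  · by_cases hxy : w 0 = w n
    · -- closed simple walk: length 0 or 2
      rw [← hxy, pp_self]
      match n, harc, hinj, hxy with
      | 0, _, _, _ => simp
      | 1, harc, _, hxy =>
          refine absurd ?_ (hnoloop (w 0))
          have h0 := harc 0 (by norm_num)
          rw [← hxy] at h0
          exact h0
      | 2, harc, _, hxy =>
          rw [Finset.prod_range_succ, Finset.prod_range_succ,
            Finset.prod_range_zero, one_mul]
          have h2 : w 2 = w 0 := hxy.symm
          rw [h2]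
          exact hredge _ _ (harc 0 (by norm_num))
      | (m + 3), harc, hinj, hxy =>
          exfalso
          have hne : w 0 ≠ w 1 := fun h => by
            have := hinj 0 1 (by omega) (by omega) h; omega
          have hw1 : IsTW T (w 0) (w 1) 1 w :=
            ⟨le_refl 1, rfl, rfl, fun i hi => by
              have : i = 0 := by omega
              subst this; exact harc 0 (by omega),
              fun a b ha hb _ => by omega⟩
          have hw2 : IsTW T (w 0) (w 1) (m + 2) (fun l => w (m + 3 - l)) := by
            refine ⟨by omega, ?_, ?_, fun i hi => ?_, fun i j hi hj hij => ?_⟩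
            · show w (m + 3 - 0) = w 0
              rw [show m + 3 - 0 = m + 3 from rfl]
              exact hxy.symm
            · show w (m + 3 - (m + 2)) = w 1
              rw [show m + 3 - (m + 2) = 1 by omega]
            · show (w (m + 3 - i), w (m + 3 - (i + 1))) ∈ T
              have h1 : m + 3 - (i + 1) < m + 3 := by omega
              have h2 : m + 3 - (i + 1) + 1 = m + 3 - i := by omega
              have h3 := harc (m + 3 - (i + 1)) h1
              rw [h2] at h3
              exact hTsymm _ _ h3
            · simp only at hij
              rcases Nat.eq_zero_or_pos i with rfl | hipos <;>
                rcases Nat.eq_zero_or_pos j with rfl | hjpos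
              · rfl
              · exfalso
                rw [show m + 3 - 0 = m + 3 from rfl, ← hxy] at hij
                have := hinj 0 (m + 3 - j) (by omega) (by omega) hij
                omega
              · exfalso
                rw [show m + 3 - 0 = m + 3 from rfl, ← hxy] at hij
                have := hinj 0 (m + 3 - i) (by omega) (by omega) hij.symm
                omega
              · have := hinj (m + 3 - i) (m + 3 - j) (by omega) (by omega) hij
                omega
          have := ((hT (w 0) (w 1) hne).2 _ _ _ _ hw1 hw2).1
          omega
    · have hIW : IsTW T (w 0) (w n) n w := by
        refine ⟨?_, rfl, rfl, harc, hinj⟩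
        rcases Nat.eq_zero_or_pos n with rfl | h
        · exact absurd rfl hxy
        · exact h
      exact (pp_eq hxy hIW).symm
  · -- non-injective walk: split off a shorter closed walk
    push_neg at hinj
    obtain ⟨i, j, hij, hj, hw⟩ : ∃ i j, i < j ∧ j < n ∧ w i = w j := by
      obtain ⟨a, b, ha, hb, hab, hne⟩ := hinj
      rcases Nat.lt_or_ge a b with h | h
      · exact ⟨a, b, h, hb, hab⟩
      · exact ⟨b, a, by omega, ha, hab.symm⟩
    set d := j - i with hd
    set m := n - d with hm
    set u : ℕ → X := fun l => if l ≤ i then w l else w (l + d) with hu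
    have hui : ∀ l, u (i + l) = w (j + l) := by
      intro l
      rcases Nat.eq_zero_or_pos l with rfl | hl
      · simpa [hu] using hw
      · have h' : ¬ (i + l ≤ i) := by omega
        simp only [hu, h', if_false]
        congr 1; omega
    have huarc : ∀ l < m, (u l, u (l + 1)) ∈ T := by
      intro l hl
      rcases Nat.lt_or_ge l i with h | h
      · have e1 : u l = w l := by
          simp only [hu]; rw [if_pos (by omega : l ≤ i)]
        have e2 : u (l + 1) = w (l + 1) := by
          simp only [hu]; rw [if_pos (by omega : l + 1 ≤ i)]
        rw [e1, e2]; exact harc l (by omega)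
      · obtain ⟨l', rfl⟩ : ∃ l', l = i + l' := ⟨l - i, by omega⟩
        have e1 : u (i + l') = w (j + l') := hui l'
        have e2 : u (i + l' + 1) = w (j + l' + 1) := by
          have e : i + l' + 1 = i + (l' + 1) := by omega
          rw [e, hui (l' + 1)]
          exact congrArg w (by omega)
        rw [e1, e2]; exact harc (j + l') (by omega)
    have hmid : ∏ l ∈ Finset.range d, r (w (i + l)) (w (i + (l + 1))) = 1 := by
      have hres := IH d (by omega) (fun l => w (i + l)) (fun l hl => by
        show (w (i + l), w (i + (l + 1))) ∈ T
        have e : i + (l + 1) = (i + l) + 1 := by omega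
        rw [e]
        exact harc (i + l) (by omega))
      simp only [Nat.add_zero] at hres
      rw [hres, show i + d = j by omega, hw, pp_self]
    have houter := IH m (by omega) u huarc
    have hu0 : u 0 = w 0 := by simp [hu]
    have hum : u m = w n := by
      have e : m = i + (m - i) := by omega
      rw [e, hui (m - i)]
      congr 1; omega
    rw [hu0, hum] at houter
    have hsplit : ∏ l ∈ Finset.range n, r (w l) (w (l + 1)) =
        (∏ l ∈ Finset.range m, r (u l) (u (l + 1))) *
          ∏ l ∈ Finset.range d, r (w (i + l)) (w (i + (l + 1))) := by
      have hn' : n = i + d + (n - j) := by omega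
      have hm' : m = i + (n - j) := by omega
      rw [hn', Finset.prod_range_add, Finset.prod_range_add, hm',
        Finset.prod_range_add]
      have e1 : ∀ l ∈ Finset.range i, r (u l) (u (l + 1)) = r (w l) (w (l + 1)) := by
        intro l hl
        rw [Finset.mem_range] at hl
        have ea : u l = w l := by
          simp only [hu]; rw [if_pos (by omega : l ≤ i)]
        have eb : u (l + 1) = w (l + 1) := by
          simp only [hu]; rw [if_pos (by omega : l + 1 ≤ i)]
        rw [ea, eb]
      have e2 : ∀ l ∈ Finset.range (n - j),
          r (u (i + l)) (u (i + l + 1)) = r (w (i + d + l)) (w (i + d + l + 1)) := by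
        intro l _
        have ea : u (i + l) = w (j + l) := hui l
        have eb : u (i + l + 1) = w (j + l + 1) := by
          have e : i + l + 1 = i + (l + 1) := by omega
          rw [e, hui (l + 1)]
          exact congrArg w (by omega)
        have ej : i + d + l = j + l := by omega
        rw [ea, eb, ej]
      have e3 : ∀ l ∈ Finset.range d,
          r (w (i + l)) (w (i + l + 1)) = r (w (i + l)) (w (i + (l + 1))) := by
        intro l _
        rw [show i + l + 1 = i + (l + 1) from rfl]
      rw [Finset.prod_congr rfl e1, Finset.prod_congr rfl e2,
        Finset.prod_congr rfl e3]
      ring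
    rw [hsplit, hmid, mul_one, houter]

/-- Transitivity of the tree-path product. -/
theorem pp_trans {T : Set (X × X)} {r : X → X → ℝ} (hT : Tree T)
    (hnoloop : ∀ z : X, (z, z) ∉ T)
    (hredge : ∀ z z', (z, z') ∈ T → r z z' * r z' z = 1)
    (hTsymm : ∀ z z', (z, z') ∈ T → (z', z) ∈ T) (a b c : X) :
    pp T r hT a b * pp T r hT b c = pp T r hT a c := by
  rcases eq_or_ne a b with rfl | hab
  · rw [pp_self, one_mul]
  rcases eq_or_ne b c with rfl | hbc
  · rw [pp_self, mul_one]
  obtain ⟨n, w, hw⟩ := (hT a b hab).1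
  obtain ⟨m, v, hv⟩ := (hT b c hbc).1
  obtain ⟨hn1, hw0, hwn, hwarc, hwinj⟩ := hw
  obtain ⟨hm1, hv0, hvm, hvarc, hvinj⟩ := hv
  set u : ℕ → X := fun l => if l < n then w l else v (l - n) with hu
  have hun : ∀ l, u (n + l) = v l := by
    intro l
    have h' : ¬ (n + l < n) := by omega
    simp only [hu, h', if_false]
    exact congrArg v (by omega)
  have huw : ∀ l ≤ n, u l = w l := by
    intro l hl
    rcases hl.lt_or_eq with h | rfl
    · simp only [hu]; rw [if_pos h]
    · have h' : ¬ (l < l) := lt_irrefl l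
      simp only [hu, h', if_false, Nat.sub_self]
      rw [hv0, hwn]
  have huarc : ∀ l < n + m, (u l, u (l + 1)) ∈ T := by
    intro l hl
    rcases Nat.lt_or_ge l n with h | h
    · rw [huw l (by omega), huw (l + 1) (by omega)]
      exact hwarc l h
    · obtain ⟨l', rfl⟩ : ∃ l', l = n + l' := ⟨l - n, by omega⟩
      rw [hun l', show n + l' + 1 = n + (l' + 1) from rfl, hun (l' + 1)]
      exact hvarc l' (by omega)
  have key := prod_walk hT hnoloop hredge hTsymm (n + m) u huarc
  rw [Finset.prod_range_add] at key
  have e1 : ∀ l ∈ Finset.range n, r (u l) (u (l + 1)) = r (w l) (w (l + 1)) := by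
    intro l hl
    rw [Finset.mem_range] at hl
    rw [huw l (by omega), huw (l + 1) (by omega)]
  have e2 : ∀ l ∈ Finset.range m,
      r (u (n + l)) (u (n + l + 1)) = r (v l) (v (l + 1)) := by
    intro l _
    rw [hun l, show n + l + 1 = n + (l + 1) from rfl, hun (l + 1)]
  rw [Finset.prod_congr rfl e1, Finset.prod_congr rfl e2] at key
  have hu0 : u 0 = a := by rw [huw 0 (by omega), hw0]
  have hunm : u (n + m) = c := by rw [hun m, hvm]
  rw [hu0, hunm] at key
  rw [pp_eq hab ⟨hn1, hw0, hwn, hwarc, hwinj⟩,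
    pp_eq hbc ⟨hm1, hv0, hvm, hvarc, hvinj⟩]
  exact key

/-- The ratio of an arbitrary arc equals the tree-path product of its endpoints. -/
theorem r_eq_pp {A T : Set (X × X)} {r : X → X → ℝ} (hT : Tree T)
    (hnoloopA : ∀ z : X, (z, z) ∉ A) (hTA : T ⊆ A)
    (hTsymm : ∀ z z', (z, z') ∈ T → (z', z) ∈ T)
    (hrpos : ∀ z z', (z, z') ∈ A → 0 < r z z')
    (hredge : ∀ z z', (z, z') ∈ A → r z z' * r z' z = 1)
    (hrfund : ∀ x y : X, (x, y) ∈ A → (x, y) ∉ T →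
      ∀ (n : ℕ) (w : ℕ → X), IsTW T y x n w →
        r x y * ∏ i ∈ Finset.range n, r (w i) (w (i + 1)) = 1)
    {x y : X} (hxy : (x, y) ∈ A) : r x y = pp T r hT x y := by
  have hnoloopT : ∀ z : X, (z, z) ∉ T := fun z h => hnoloopA z (hTA h)
  have hredgeT : ∀ z z', (z, z') ∈ T → r z z' * r z' z = 1 :=
    fun z z' h => hredge z z' (hTA h)
  have hne : x ≠ y := fun h => hnoloopA x (h ▸ hxy)
  by_cases hxT : (x, y) ∈ T
  · -- the one-arc walk is the unique simple tree walk
    have h1 : IsTW T x y 1 (fun l => if l = 0 then x else y) := by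
      refine ⟨le_refl 1, ?_, ?_, fun i hi => ?_, fun a b ha hb _ => by omega⟩
      · simp
      · simp
      · have : i = 0 := by omega
        subst this
        simpa using hxT
    rw [pp_eq hne h1]
    simp
  · obtain ⟨n, w, hw⟩ := (hT y x hne.symm).1
    have h1 := hrfund x y hxy hxT n w hw
    have h2 : pp T r hT y x = ∏ i ∈ Finset.range n, r (w i) (w (i + 1)) :=
      pp_eq hne.symm hw
    have h3 : pp T r hT x y * pp T r hT y x = 1 := by
      rw [pp_trans hT hnoloopT hredgeT hTsymm x y x, pp_self]
    have hpos : 0 < pp T r hT y x :=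
      pp_pos hT (fun z z' h => hrpos z z' (hTA h)) y x
    rw [← h2] at h1
    have h4 := h1.trans h3.symm
    exact mul_right_cancel₀ (ne_of_gt hpos) h4

/-- Closed-walk products of the ratio are trivial. -/
theorem closed_walk_prod {A T : Set (X × X)} {r : X → X → ℝ} (hT : Tree T)
    (hnoloopA : ∀ z : X, (z, z) ∉ A) (hTA : T ⊆ A)
    (hTsymm : ∀ z z', (z, z') ∈ T → (z', z) ∈ T)
    (hrpos : ∀ z z', (z, z') ∈ A → 0 < r z z')
    (hredge : ∀ z z', (z, z') ∈ A → r z z' * r z' z = 1)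
    (hrfund : ∀ x y : X, (x, y) ∈ A → (x, y) ∉ T →
      ∀ (n : ℕ) (w : ℕ → X), IsTW T y x n w →
        r x y * ∏ i ∈ Finset.range n, r (w i) (w (i + 1)) = 1)
    (n : ℕ) (w : ℕ → X) (harc : ∀ i < n, (w i, w (i + 1)) ∈ A)
    (hclosed : w n = w 0) :
    ∏ i ∈ Finset.range n, r (w i) (w (i + 1)) = 1 := by
  have hnoloopT : ∀ z : X, (z, z) ∉ T := fun z h => hnoloopA z (hTA h)
  have hredgeT : ∀ z z', (z, z') ∈ T → r z z' * r z' z = 1 :=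
    fun z z' h => hredge z z' (hTA h)
  have step : ∏ i ∈ Finset.range n, r (w i) (w (i + 1)) =
      ∏ i ∈ Finset.range n, pp T r hT (w i) (w (i + 1)) :=
    Finset.prod_congr rfl fun i hi =>
      r_eq_pp hT hnoloopA hTA hTsymm hrpos hredge hrfund
        (harc i (Finset.mem_range.mp hi))
  rw [step]
  have tel : ∀ N, ∏ i ∈ Finset.range N, pp T r hT (w i) (w (i + 1)) =
      pp T r hT (w 0) (w N) := by
    intro N
    induction N with
    | zero => rw [Finset.prod_range_zero, pp_self]
    | succ N ih =>
      rw [Finset.prod_range_succ, ih,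
        pp_trans hT hnoloopT hredgeT hTsymm (w 0) (w N) (w (N + 1))]
  rw [tel n, hclosed, pp_self]

end Stmt8Aux

/-- Let `(𝒳, 𝒜)` be a symmetric, connected, locally finite directed graph
(without loops), `𝒯 ⊆ 𝒜` a spanning tree (encoded through the equivalent characterization:
between any two distinct vertices there is a unique simple directed `𝒯`-walk), and let `j`, `k`
be positive, continuously `t`-differentiable jump intensities (with derivative data `j'`, `k'`).
If the arc characteristics of `j` and `k` agree on the tree arcs, and their closed-walk
characteristics agree on every closed walk of length two and on every fundamental closed walk
(a non-tree arc concatenated with the unique simple `𝒯`-walk back), then the arc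
characteristics agree on *all* arcs and the closed-walk characteristics agree on *all* closed
walks, for all `t ∈ (0,1)`. -/
theorem stmt8 {X : Type*} [Countable X] (A T : Set (X × X))
    (hsymm : ∀ z z' : X, (z, z') ∈ A → (z', z) ∈ A)
    (hnoloop : ∀ z : X, (z, z) ∉ A)
    (hconn : ∀ x y : X, ∃ (n : ℕ) (w : ℕ → X),
      w 0 = x ∧ w n = y ∧ ∀ i < n, (w i, w (i + 1)) ∈ A)
    (hfin : ∀ z : X, {z' : X | (z, z') ∈ A}.Finite)
    (hTA : T ⊆ A)
    (hTsymm : ∀ z z' : X, (z, z') ∈ T → (z', z) ∈ T)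
    (hTtree : ∀ x y : X, x ≠ y →
      (∃ (n : ℕ) (w : ℕ → X), 1 ≤ n ∧ w 0 = x ∧ w n = y ∧
        (∀ i < n, (w i, w (i + 1)) ∈ T) ∧
        (∀ i j, i < n → j < n → w i = w j → i = j)) ∧
      (∀ (n : ℕ) (w : ℕ → X) (m : ℕ) (v : ℕ → X),
        (1 ≤ n ∧ w 0 = x ∧ w n = y ∧ (∀ i < n, (w i, w (i + 1)) ∈ T) ∧
          (∀ i j, i < n → j < n → w i = w j → i = j)) →
        (1 ≤ m ∧ v 0 = x ∧ v m = y ∧ (∀ i < m, (v i, v (i + 1)) ∈ T) ∧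
          (∀ i j, i < m → j < m → v i = v j → i = j)) →
        n = m ∧ ∀ i ≤ n, w i = v i))
    (j j' k k' : ℝ → X → X → ℝ)
    (hjpos : ∀ t ∈ Set.Ioo (0 : ℝ) 1, ∀ z z' : X, (z, z') ∈ A → 0 < j t z z')
    (hjderiv : ∀ z z' : X, (z, z') ∈ A → ∀ t ∈ Set.Ioo (0 : ℝ) 1,
      HasDerivAt (fun s => j s z z') (j' t z z') t)
    (hjcont : ∀ z z' : X, (z, z') ∈ A →
      ContinuousOn (fun t => j' t z z') (Set.Ioo 0 1))
    (hkpos : ∀ t ∈ Set.Ioo (0 : ℝ) 1, ∀ z z' : X, (z, z') ∈ A → 0 < k t z z')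
    (hkderiv : ∀ z z' : X, (z, z') ∈ A → ∀ t ∈ Set.Ioo (0 : ℝ) 1,
      HasDerivAt (fun s => k s z z') (k' t z z') t)
    (hkcont : ∀ z z' : X, (z, z') ∈ A →
      ContinuousOn (fun t => k' t z z') (Set.Ioo 0 1))
    -- (i) equality of the arc characteristics on the tree arcs
    (harc : ∀ t ∈ Set.Ioo (0 : ℝ) 1, ∀ z z' : X, (z, z') ∈ T →
      k' t z z' / k t z z'
          + (∑' w : {w : X // (z', w) ∈ A}, k t z' w.1)
          - (∑' w : {w : X // (z, w) ∈ A}, k t z w.1) =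
        j' t z z' / j t z z'
          + (∑' w : {w : X // (z', w) ∈ A}, j t z' w.1)
          - (∑' w : {w : X // (z, w) ∈ A}, j t z w.1))
    -- (ii) equality of the closed-walk characteristics on the closed walks of length two
    (hedge : ∀ t ∈ Set.Ioo (0 : ℝ) 1, ∀ z z' : X, (z, z') ∈ A →
      k t z z' * k t z' z = j t z z' * j t z' z)
    -- (iii) equality of the closed-walk characteristics on the fundamental closed walks
    (hfund : ∀ t ∈ Set.Ioo (0 : ℝ) 1, ∀ x y : X, (x, y) ∈ A → (x, y) ∉ T →
      ∀ (n : ℕ) (w : ℕ → X), 1 ≤ n → w 0 = y → w n = x →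
        (∀ i < n, (w i, w (i + 1)) ∈ T) →
        (∀ i j, i < n → j < n → w i = w j → i = j) →
        k t x y * ∏ i ∈ Finset.range n, k t (w i) (w (i + 1)) =
          j t x y * ∏ i ∈ Finset.range n, j t (w i) (w (i + 1))) :
    -- the arc characteristics agree on all arcs …
    (∀ t ∈ Set.Ioo (0 : ℝ) 1, ∀ z z' : X, (z, z') ∈ A →
      k' t z z' / k t z z'
          + (∑' w : {w : X // (z', w) ∈ A}, k t z' w.1)
          - (∑' w : {w : X // (z, w) ∈ A}, k t z w.1) =
        j' t z z' / j t z z'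
          + (∑' w : {w : X // (z', w) ∈ A}, j t z' w.1)
          - (∑' w : {w : X // (z, w) ∈ A}, j t z w.1)) ∧
    -- … and the closed-walk characteristics agree on all closed walks
    (∀ t ∈ Set.Ioo (0 : ℝ) 1, ∀ (n : ℕ) (w : ℕ → X), 1 ≤ n →
      (∀ i < n, (w i, w (i + 1)) ∈ A) → w n = w 0 →
      ∏ i ∈ Finset.range n, k t (w i) (w (i + 1)) =
        ∏ i ∈ Finset.range n, j t (w i) (w (i + 1))) := by
  have hTree : Stmt8Aux.Tree T := hTtree
  constructor
  · -- arc characteristics on all arcs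
    intro t ht z z' hA
    by_cases hzT : (z, z') ∈ T
    · exact harc t ht z z' hzT
    · have hne : z ≠ z' := fun h => hnoloop z (h ▸ hA)
      obtain ⟨n, w, hw⟩ := (hTree z' z hne.symm).1
      obtain ⟨hn1, hw0, hwn, hwarc, hwinj⟩ := hw
      have hwA : ∀ i < n, (w i, w (i + 1)) ∈ A := fun i hi => hTA (hwarc i hi)
      -- log-derivatives of the two sides of the fundamental-cycle identity
      have hasG : HasDerivAt
          (fun s => Real.log (k s z z') +
            ∑ i ∈ Finset.range n, Real.log (k s (w i) (w (i + 1))))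
          (k' t z z' / k t z z' +
            ∑ i ∈ Finset.range n, k' t (w i) (w (i + 1)) / k t (w i) (w (i + 1))) t := by
        refine HasDerivAt.add ((hkderiv z z' hA t ht).log
          (ne_of_gt (hkpos t ht z z' hA))) (HasDerivAt.fun_sum fun i hi => ?_)
        have hiA := hwA i (Finset.mem_range.mp hi)
        exact (hkderiv _ _ hiA t ht).log (ne_of_gt (hkpos t ht _ _ hiA))
      have hasH : HasDerivAt
          (fun s => Real.log (j s z z') +
            ∑ i ∈ Finset.range n, Real.log (j s (w i) (w (i + 1))))
          (j' t z z' / j t z z' +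
            ∑ i ∈ Finset.range n, j' t (w i) (w (i + 1)) / j t (w i) (w (i + 1))) t := by
        refine HasDerivAt.add ((hjderiv z z' hA t ht).log
          (ne_of_gt (hjpos t ht z z' hA))) (HasDerivAt.fun_sum fun i hi => ?_)
        have hiA := hwA i (Finset.mem_range.mp hi)
        exact (hjderiv _ _ hiA t ht).log (ne_of_gt (hjpos t ht _ _ hiA))
      -- the two functions agree on `Ioo 0 1`
      have hGH : ∀ s ∈ Set.Ioo (0 : ℝ) 1,
          Real.log (k s z z') +
            ∑ i ∈ Finset.range n, Real.log (k s (w i) (w (i + 1))) =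
          Real.log (j s z z') +
            ∑ i ∈ Finset.range n, Real.log (j s (w i) (w (i + 1))) := by
        intro s hs
        have hkne : ∀ i ∈ Finset.range n, k s (w i) (w (i + 1)) ≠ 0 := fun i hi =>
          ne_of_gt (hkpos s hs _ _ (hwA i (Finset.mem_range.mp hi)))
        have hjne : ∀ i ∈ Finset.range n, j s (w i) (w (i + 1)) ≠ 0 := fun i hi =>
          ne_of_gt (hjpos s hs _ _ (hwA i (Finset.mem_range.mp hi)))
        have hkprodpos : 0 < ∏ i ∈ Finset.range n, k s (w i) (w (i + 1)) :=
          Finset.prod_pos fun i hi => hkpos s hs _ _ (hwA i (Finset.mem_range.mp hi))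
        have hjprodpos : 0 < ∏ i ∈ Finset.range n, j s (w i) (w (i + 1)) :=
          Finset.prod_pos fun i hi => hjpos s hs _ _ (hwA i (Finset.mem_range.mp hi))
        have key := hfund s hs z z' hA hzT n w hn1 hw0 hwn hwarc hwinj
        have e1 := Real.log_prod (s := Finset.range n)
          (f := fun i => k s (w i) (w (i + 1))) hkne
        have e2 := Real.log_prod (s := Finset.range n)
          (f := fun i => j s (w i) (w (i + 1))) hjne
        rw [← e1, ← e2, ← Real.log_mul (ne_of_gt (hkpos s hs z z' hA))
          (ne_of_gt hkprodpos), ← Real.log_mul (ne_of_gt (hjpos s hs z z' hA))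
          (ne_of_gt hjprodpos), key]
      -- hence the derivatives agree
      have hmem : Set.Ioo (0 : ℝ) 1 ∈ nhds t := isOpen_Ioo.mem_nhds ht
      have hasH' : HasDerivAt
          (fun s => Real.log (k s z z') +
            ∑ i ∈ Finset.range n, Real.log (k s (w i) (w (i + 1))))
          (j' t z z' / j t z z' +
            ∑ i ∈ Finset.range n, j' t (w i) (w (i + 1)) / j t (w i) (w (i + 1))) t :=
        hasH.congr_of_eventuallyEq (Filter.eventuallyEq_of_mem hmem hGH)
      have hder := hasG.unique hasH'
      -- telescoping the tree-arc relation along the walk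
      have hterm : ∀ i ∈ Finset.range n,
          k' t (w i) (w (i + 1)) / k t (w i) (w (i + 1)) -
            j' t (w i) (w (i + 1)) / j t (w i) (w (i + 1)) =
          (fun l => (∑' u : {u : X // (w l, u) ∈ A}, k t (w l) u.1) -
            (∑' u : {u : X // (w l, u) ∈ A}, j t (w l) u.1)) i -
          (fun l => (∑' u : {u : X // (w l, u) ∈ A}, k t (w l) u.1) -
            (∑' u : {u : X // (w l, u) ∈ A}, j t (w l) u.1)) (i + 1) := by
        intro i hi
        have := harc t ht (w i) (w (i + 1)) (hwarc i (Finset.mem_range.mp hi))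
        simp only
        linarith
      have htel := Finset.sum_range_sub'
        (fun l => (∑' u : {u : X // (w l, u) ∈ A}, k t (w l) u.1) -
          (∑' u : {u : X // (w l, u) ∈ A}, j t (w l) u.1)) n
      have hsum : (∑ i ∈ Finset.range n,
            k' t (w i) (w (i + 1)) / k t (w i) (w (i + 1))) -
          (∑ i ∈ Finset.range n,
            j' t (w i) (w (i + 1)) / j t (w i) (w (i + 1))) =
          ((∑' u : {u : X // (w 0, u) ∈ A}, k t (w 0) u.1) -
            (∑' u : {u : X // (w 0, u) ∈ A}, j t (w 0) u.1)) -
          ((∑' u : {u : X // (w n, u) ∈ A}, k t (w n) u.1) -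
            (∑' u : {u : X // (w n, u) ∈ A}, j t (w n) u.1)) := by
        rw [← Finset.sum_sub_distrib, Finset.sum_congr rfl hterm]
        exact htel
      rw [hw0, hwn] at hsum
      linarith [hder, hsum]
  · -- closed-walk characteristics on all closed walks
    intro t ht n w hn harcA hclosed
    have hrpos : ∀ z z', (z, z') ∈ A → 0 < k t z z' / j t z z' := fun z z' h =>
      div_pos (hkpos t ht z z' h) (hjpos t ht z z' h)
    have hredge : ∀ z z', (z, z') ∈ A →
        (k t z z' / j t z z') * (k t z' z / j t z' z) = 1 := by
      intro z z' h
      have h' := hsymm z z' h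
      rw [div_mul_div_comm, div_eq_one_iff_eq
        (ne_of_gt (mul_pos (hjpos t ht z z' h) (hjpos t ht z' z h')))]
      exact hedge t ht z z' h
    have hrfund : ∀ x y : X, (x, y) ∈ A → (x, y) ∉ T →
        ∀ (m : ℕ) (v : ℕ → X), Stmt8Aux.IsTW T y x m v →
          (k t x y / j t x y) *
            ∏ i ∈ Finset.range m, (k t (v i) (v (i + 1)) / j t (v i) (v (i + 1))) = 1 := by
      intro x y hxyA hxyT m v hv
      obtain ⟨hm1, hv0, hvm, hvarc, hvinj⟩ := hv
      have hvA : ∀ i < m, (v i, v (i + 1)) ∈ A := fun i hi => hTA (hvarc i hi)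
      have hjprodpos : 0 < ∏ i ∈ Finset.range m, j t (v i) (v (i + 1)) :=
        Finset.prod_pos fun i hi => hjpos t ht _ _ (hvA i (Finset.mem_range.mp hi))
      rw [Finset.prod_div_distrib, div_mul_div_comm, div_eq_one_iff_eq
        (ne_of_gt (mul_pos (hjpos t ht x y hxyA) hjprodpos))]
      exact hfund t ht x y hxyA hxyT m v hm1 hv0 hvm hvarc hvinj
    have h := Stmt8Aux.closed_walk_prod (A := A) (T := T)
      (r := fun a b => k t a b / j t a b) hTree hnoloop hTA hTsymm
      hrpos hredge hrfund n w harcA hclosed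
    rw [Finset.prod_div_distrib] at h
    have hjprodpos : 0 < ∏ i ∈ Finset.range n, j t (w i) (w (i + 1)) :=
      Finset.prod_pos fun i hi => hjpos t ht _ _ (harcA i (Finset.mem_range.mp hi))
    rw [div_eq_one_iff_eq (ne_of_gt hjprodpos)] at h
    exact h
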